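/- The element 1 ∈ B_0 is a two-sided unit for the product ⋆: for every f ∈ F_p (p ≥ 0), 1 ⋆ f = f ⋆ 1 = f. -/

import Mathlib

open Classical MvPolynomial Finsupp TensorProduct

set_option maxHeartbeats 1600000

noncomputable section

namespace EdgeRes

/-- A "cell" `(σ, τ)`: a pair of finite sets of vertices, representing the symbol `[σ|τ]`. -/
abbrev Cell (n : ℕ) := Finset (Fin n) × Finset (Fin n)

/-- The cointerval graph of the intervals `[a i, b i]`: distinct vertices are adjacent
iff the corresponding closed intervals are disjoint. -/
def cigraph (n : ℕ) (a b : Fin n → ℝ) : SimpleGraph (Fin n) where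
  Adj i j := i ≠ j ∧ Disjoint (Set.Icc (a i) (b i)) (Set.Icc (a j) (b j))
  symm := by constructor; intro i j h; exact ⟨h.1.symm, h.2.symm⟩
  loopless := by constructor; intro i h; exact h.1 rfl

variable {n : ℕ}

/-- The homological degree of a cell: `|σ| + |τ| - 1`. -/
def cellDeg (e : Cell n) : ℕ := e.1.card + e.2.card - 1

/-- `e = (σ, τ)` is a basis cell: either the degree-0 cell `(∅, ∅)` (representing `1 ∈ B₀`),
or `σ, τ` are disjoint and nonempty, `max σ < min τ`, and every `i ∈ σ` is adjacent
to `min τ` in `G`. -/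
def IsBasisCell (G : SimpleGraph (Fin n)) (e : Cell n) : Prop :=
  e = (∅, ∅) ∨
  (e.1.Nonempty ∧ e.2.Nonempty ∧ Disjoint e.1 e.2 ∧
   (∀ i ∈ e.1, ∀ j ∈ e.2, i < j) ∧
   (∀ i ∈ e.1, ∀ j ∈ e.2, (∀ j' ∈ e.2, j ≤ j') → G.Adj i j))

/-- `e ∈ B_d`. -/
def InB (G : SimpleGraph (Fin n)) (d : ℕ) (e : Cell n) : Prop :=
  IsBasisCell G e ∧ cellDeg e = d

/-- The underlying module of the resolution: the free `S`-module on all cells (the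
resolution `F` is the submodule family spanned by the basis cells of each degree). -/
abbrev Ftot (n : ℕ) (k : Type) [Field k] := Cell n →₀ MvPolynomial (Fin n) k

variable (G : SimpleGraph (Fin n)) (k : Type) [Field k]

/-- The basis vector corresponding to a cell, where symbols that are not genuine
basis elements are interpreted as `0`. -/
def sym (e : Cell n) : Ftot n k :=
  if IsBasisCell G e then Finsupp.single e 1 else 0

/-- The differential on a basis cell: `d[{i}|{j}] = x_i x_j`, and for `|σ|+|τ| ≥ 3`,
`d[σ|τ] = Σ_{i∈σ} (−1)^{|τ|+|{j∈σ : j>i}|} x_i [σ∖i|τ] + Σ_{i∈τ} (−1)^{|{j∈τ : j>i}|} x_i [σ|τ∖i]`. -/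
def diffCell (e : Cell n) : Ftot n k :=
  if IsBasisCell G e then
    if e.1.card + e.2.card = 2 then
      (∏ i ∈ e.1 ∪ e.2, (X i : MvPolynomial (Fin n) k)) • sym G k ((∅, ∅) : Cell n)
    else if 3 ≤ e.1.card + e.2.card then
      (∑ i ∈ e.1,
        (((-1 : MvPolynomial (Fin n) k) ^ (e.2.card + (e.1.filter fun j => i < j).card)) * X i) •
          sym G k (e.1.erase i, e.2))
      + (∑ i ∈ e.2,
        (((-1 : MvPolynomial (Fin n) k) ^ ((e.2.filter fun j => i < j).card)) * X i) •
          sym G k (e.1, e.2.erase i))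
    else 0
  else 0

/-- The differential, as an `S`-linear endomorphism of the total module (it is zero in
degree `0` and on non-basis cells). -/
def Dmap : Ftot n k →ₗ[MvPolynomial (Fin n) k] Ftot n k :=
  Finsupp.lsum ℕ fun e => LinearMap.smulRight LinearMap.id (diffCell G k e)

/-- The submodule `F_d`: the span of the basis cells in `B_d`.  (`F` is the direct sum of
these, and `F_0 = S·[∅|∅] ≅ S`.) -/
def Fsub (d : ℕ) : Submodule (MvPolynomial (Fin n) k) (Ftot n k) :=
  Submodule.span _ {f : Ftot n k | ∃ e : Cell n, InB G d e ∧ f = Finsupp.single e 1}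

/-- The edge ideal `I_G`, generated by the `x_i x_j` for edges `ij` of `G`. -/
def edgeIdeal : Ideal (MvPolynomial (Fin n) k) :=
  Ideal.span {m | ∃ i j : Fin n, G.Adj i j ∧ m = X i * X j}

/-- The irrelevant maximal ideal `(x_1, …, x_n)`. -/
def irrIdeal (n : ℕ) (k : Type) [Field k] : Ideal (MvPolynomial (Fin n) k) :=
  Ideal.span (Set.range fun i : Fin n => (X i : MvPolynomial (Fin n) k))

/-- The set of pairs `(i, j)` with `i < j`, `ij ∈ E(G)`, and `x_i x_j ∣ x^α`; i.e. the
elements `[{i}|{j}]` of `B₁` whose monomial divides `x^α`. -/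
def DvdSet (α : Fin n →₀ ℕ) : Finset (Fin n × Fin n) :=
  Finset.univ.filter fun p => p.1 < p.2 ∧ G.Adj p.1 p.2 ∧ 1 ≤ α p.1 ∧ 1 ≤ α p.2

/-- `c` on a monomial `x^α ∈ F_0 = S`: zero if `x^α ∉ I_G`; otherwise
`(x^α/(x_i x_j))·[{i}|{j}]` for the `≺`-minimal `[{i}|{j}] ∈ B₁` with `x_i x_j ∣ x^α`
(i.e. `j` is largest possible and then `i` smallest possible). -/
def cZero (α : Fin n →₀ ℕ) : Ftot n k :=
  if h : (DvdSet G α).Nonempty then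
    let t := ((DvdSet G α).image Prod.snd).max' (h.image _)
    if h2 : ((((DvdSet G α).filter fun p => p.2 = t)).image Prod.fst).Nonempty then
      let s := ((((DvdSet G α).filter fun p => p.2 = t)).image Prod.fst).min' h2
      (monomial (α - Finsupp.single s 1 - Finsupp.single t 1) (1 : k)) • sym G k ({s}, {t})
    else 0
  else 0

/-- `C₁ = {i ∈ supp α : i > max τ}`. -/
def C1set (τ : Finset (Fin n)) (α : Fin n →₀ ℕ) : Finset (Fin n) :=
  α.support.filter fun i => ∀ j ∈ τ, j < i

/-- `C₂ = {i ∈ supp α : i < min σ, {i, min τ} ∈ E(G)}`. -/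
def C2set (σ τ : Finset (Fin n)) (α : Fin n →₀ ℕ) : Finset (Fin n) :=
  α.support.filter fun i =>
    (∀ s ∈ σ, i < s) ∧ ∀ j ∈ τ, (∀ j' ∈ τ, j ≤ j') → G.Adj i j

/-- `C₃ = {i ∈ supp α : i < min σ, i < max supp α, {i, max supp α} ∈ E(G)}`. -/
def C3set (σ : Finset (Fin n)) (α : Fin n →₀ ℕ) : Finset (Fin n) :=
  α.support.filter fun i =>
    (∀ s ∈ σ, i < s) ∧ ∀ m ∈ α.support, (∀ m' ∈ α.support, m' ≤ m) → (i < m ∧ G.Adj i m)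

/-- The value of the contracting homotopy `c` on the `k`-basis vector `x^α·e`. -/
def cMono (e : Cell n) (α : Fin n →₀ ℕ) : Ftot n k :=
  if IsBasisCell G e then
    if hτ : e.2.Nonempty then
      if e.2.card = 1 then
        -- `τ = {t}`
        let t := e.2.max' hτ
        if h1 : (C1set e.2 α).Nonempty then
          let m1 := (C1set e.2 α).max' h1
          (monomial (α - Finsupp.single m1 1) (1 : k)) • sym G k (e.1, insert m1 e.2)
          + (if h3 : (C3set G e.1 α).Nonempty then
              let m3 := (C3set G e.1 α).min' h3
              ((-1 : MvPolynomial (Fin n) k) ^ (e.1.card + 1)) •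
                ((monomial (α + Finsupp.single t 1 - Finsupp.single m1 1 - Finsupp.single m3 1)
                    (1 : k)) • sym G k (insert m3 e.1, ({m1} : Finset (Fin n))))
            else 0)
        else
          if h2 : (C2set G e.1 e.2 α).Nonempty then
            let m2 := (C2set G e.1 e.2 α).min' h2
            ((-1 : MvPolynomial (Fin n) k) ^ (e.1.card + 1)) •
              ((monomial (α - Finsupp.single m2 1) (1 : k)) • sym G k (insert m2 e.1, e.2))
          else 0
      else
        -- `|τ| ≥ 2`
        if h1 : (C1set e.2 α).Nonempty then
          let m1 := (C1set e.2 α).max' h1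
          (monomial (α - Finsupp.single m1 1) (1 : k)) • sym G k (e.1, insert m1 e.2)
        else 0
    else cZero G k α  -- the degree-0 basis cell `(∅, ∅)`
  else 0

/-- The `k`-basis of the total module, indexed by pairs (cell, monomial exponent). -/
def FBasis (n : ℕ) (k : Type) [Field k] :
    Module.Basis ((_ : Cell n) × (Fin n →₀ ℕ)) k (Ftot n k) :=
  Finsupp.basis fun _ => MvPolynomial.basisMonomials (Fin n) k

/-- The contracting homotopy `c`, as a `k`-linear endomorphism of the total module. -/
def Cmap : Ftot n k →ₗ[k] Ftot n k :=
  (FBasis n k).constr ℕ fun p => cMono G k p.1 p.2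

/-- The `S`-bilinear extension of a map defined on pairs of cells. -/
def biext (b : Cell n → Cell n → Ftot n k) (f g : Ftot n k) : Ftot n k :=
  ∑ e₁ ∈ f.support, ∑ e₂ ∈ g.support, (f e₁ * g e₂) • b e₁ e₂

/-- The product of two basis cells, defined recursively (with fuel, which suffices as each
recursive step lowers the total degree): `1 ⋆ 1 = 1`, and for `p + q ≥ 1`,
`e₁ ⋆ e₂ = c((d e₁) ⋆ e₂) + (−1)^p c(e₁ ⋆ (d e₂))`. -/
def bstar : ℕ → Cell n → Cell n → Ftot n k
  | 0, _, _ => 0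
  | N + 1, e₁, e₂ =>
    if cellDeg e₁ + cellDeg e₂ = 0 then Finsupp.single ((∅, ∅) : Cell n) 1
    else
      Cmap G k (biext k (fun a b => bstar N a b) (Dmap G k (Finsupp.single e₁ 1)) (Finsupp.single e₂ 1))
      + ((-1 : MvPolynomial (Fin n) k) ^ cellDeg e₁) •
          Cmap G k (biext k (fun a b => bstar N a b) (Finsupp.single e₁ 1) (Dmap G k (Finsupp.single e₂ 1)))

/-- The product `⋆` on the resolution, extended `S`-bilinearly from basis cells. -/
def pstar (f g : Ftot n k) : Ftot n k := biext k (bstar G k (4 * n + 4)) f g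

/-- The map `∂` on a basis cell: `∂[{i}|{j}] = x_i x_j`, and for `|σ|+|τ| ≥ 3`,
`∂[σ|τ] = x_{max τ}[σ|τ∖max τ] − (−1)^{|τ|+|σ|} x_{min σ}[σ∖min σ|τ]`. -/
def partialCell (e : Cell n) : Ftot n k :=
  if IsBasisCell G e then
    if e.1.card + e.2.card = 2 then
      (∏ i ∈ e.1 ∪ e.2, (X i : MvPolynomial (Fin n) k)) • sym G k ((∅, ∅) : Cell n)
    else if 3 ≤ e.1.card + e.2.card then
      if h1 : e.1.Nonempty then
        if h2 : e.2.Nonempty then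
          (X (e.2.max' h2) : MvPolynomial (Fin n) k) • sym G k (e.1, e.2.erase (e.2.max' h2))
          - ((-1 : MvPolynomial (Fin n) k) ^ (e.2.card + e.1.card)) •
              ((X (e.1.min' h1) : MvPolynomial (Fin n) k) •
                sym G k (e.1.erase (e.1.min' h1), e.2))
        else 0
      else 0
    else 0
  else 0

/-- The map `∂`, as an `S`-linear endomorphism of the total module. -/
def Pmap : Ftot n k →ₗ[MvPolynomial (Fin n) k] Ftot n k :=
  Finsupp.lsum ℕ fun e => LinearMap.smulRight LinearMap.id (partialCell G k e)

/-- The `k`-linear projection `π` of `S` fixing each monomial not in `I_G` and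
annihilating each monomial in `I_G`. -/
def piMap : MvPolynomial (Fin n) k →ₗ[k] MvPolynomial (Fin n) k :=
  (MvPolynomial.basisMonomials (Fin n) k).constr ℕ fun α =>
    if monomial α (1 : k) ∈ edgeIdeal G k then 0 else monomial α (1 : k)

/-- The `ℕⁿ`-multidegree of the basis vector `x^α [σ|τ]`: `α + Σ_{i ∈ σ∪τ} eᵢ`. -/
def mdeg (e : Cell n) (α : Fin n →₀ ℕ) : Fin n →₀ ℕ :=
  α + ∑ i ∈ e.1 ∪ e.2, Finsupp.single i 1

/-- The `μ`-homogeneous component of the resolution (as a `k`-subspace). -/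
def Hsub (μ : Fin n →₀ ℕ) : Submodule k (Ftot n k) :=
  Submodule.span k {f : Ftot n k |
    ∃ (e : Cell n) (α : Fin n →₀ ℕ), IsBasisCell G e ∧ mdeg e α = μ ∧
      f = Finsupp.single e (monomial α (1 : k))}


section Aux

variable {n : ℕ} (G : SimpleGraph (Fin n)) (k : Type) [Field k]

lemma sym_of_basis {e : Cell n} (h : IsBasisCell G e) :
    sym G k e = Finsupp.single e 1 := if_pos h

lemma sym_of_not_basis {e : Cell n} (h : ¬ IsBasisCell G e) : sym G k e = 0 := if_neg h

lemma empty_isBasisCell : IsBasisCell G ((∅, ∅) : Cell n) := Or.inl rfl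

lemma cellDeg_empty : cellDeg ((∅, ∅) : Cell n) = 0 := rfl

lemma Dmap_single (e : Cell n) (c : MvPolynomial (Fin n) k) :
    Dmap G k (Finsupp.single e c) = c • diffCell G k e := by
  simp [Dmap, Finsupp.lsum_single]

lemma FBasis_apply (e : Cell n) (α : Fin n →₀ ℕ) :
    FBasis n k ⟨e, α⟩ = Finsupp.single e (monomial α 1) := by
  rw [FBasis, Finsupp.coe_basis, coe_basisMonomials]

lemma Cmap_single (e : Cell n) (α : Fin n →₀ ℕ) (c : k) :
    Cmap G k (Finsupp.single e (monomial α c)) = c • cMono G k e α := by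
  have h : Finsupp.single e (monomial α c) = c • FBasis n k ⟨e, α⟩ := by
    rw [FBasis_apply, Finsupp.smul_single, MvPolynomial.smul_monomial, smul_eq_mul, mul_one]
  rw [h, map_smul, Cmap, Module.Basis.constr_basis]

end Aux

section Aux2

variable {n : ℕ} (G : SimpleGraph (Fin n)) (k : Type) [Field k]

lemma C1set_single_empty {τ : Finset (Fin n)} {i j : Fin n} (hj : j ∈ τ) (hij : i < j) :
    C1set τ (Finsupp.single i (1 : ℕ)) = ∅ := by
  ext a
  simp only [C1set, Finset.mem_filter, Finsupp.support_single_ne_zero _ one_ne_zero,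
    Finset.mem_singleton, Finset.notMem_empty, iff_false, not_and]
  rintro rfl h
  exact absurd (h j hj) (not_lt.2 hij.le)

lemma C1set_single_self {τ : Finset (Fin n)} {i : Fin n} (h : ∀ j ∈ τ, j < i) :
    C1set τ (Finsupp.single i (1 : ℕ)) = {i} := by
  ext a
  simp only [C1set, Finset.mem_filter, Finsupp.support_single_ne_zero _ one_ne_zero,
    Finset.mem_singleton]
  constructor
  · rintro ⟨rfl, -⟩; rfl
  · rintro rfl; exact ⟨rfl, h⟩

lemma C3set_single (σ : Finset (Fin n)) (i : Fin n) :
    C3set G σ (Finsupp.single i (1 : ℕ)) = ∅ := by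
  ext a
  simp only [C3set, Finset.mem_filter, Finsupp.support_single_ne_zero _ one_ne_zero,
    Finset.mem_singleton, Finset.notMem_empty, iff_false, not_and]
  rintro rfl - h
  exact absurd (h _ rfl (by rintro m' rfl; exact le_refl _)).1 (lt_irrefl _)

lemma C2set_single_empty {σ τ : Finset (Fin n)} {i s : Fin n} (hs : s ∈ σ) (hsi : ¬ i < s) :
    C2set G σ τ (Finsupp.single i (1 : ℕ)) = ∅ := by
  ext a
  simp only [C2set, Finset.mem_filter, Finsupp.support_single_ne_zero _ one_ne_zero,
    Finset.mem_singleton, Finset.notMem_empty, iff_false, not_and]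
  rintro rfl h1 -
  exact hsi (h1 s hs)

lemma C2set_single_self {σ τ : Finset (Fin n)} {i : Fin n}
    (h1 : ∀ s ∈ σ, i < s) (h2 : ∀ j ∈ τ, (∀ j' ∈ τ, j ≤ j') → G.Adj i j) :
    C2set G σ τ (Finsupp.single i (1 : ℕ)) = {i} := by
  ext a
  simp only [C2set, Finset.mem_filter, Finsupp.support_single_ne_zero _ one_ne_zero,
    Finset.mem_singleton]
  constructor
  · rintro ⟨rfl, -⟩; rfl
  · rintro rfl; exact ⟨rfl, h1, h2⟩

end Aux2

section Aux3

variable {n : ℕ} (G : SimpleGraph (Fin n)) (k : Type) [Field k]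

lemma cMono_zero1 {e : Cell n} (hb : IsBasisCell G e) (hτ : e.2.Nonempty)
    (hcard : e.2.card = 1) {α : Fin n →₀ ℕ}
    (h1 : C1set e.2 α = ∅) (h2 : C2set G e.1 e.2 α = ∅) : cMono G k e α = 0 := by
  rw [cMono, if_pos hb, dif_pos hτ, if_pos hcard]
  rw [dif_neg (by rw [h1]; exact Finset.not_nonempty_empty)]
  rw [dif_neg (by rw [h2]; exact Finset.not_nonempty_empty)]

lemma cMono_zero2 {e : Cell n} (hb : IsBasisCell G e) (hτ : e.2.Nonempty)
    (hcard : ¬ e.2.card = 1) {α : Fin n →₀ ℕ}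
    (h1 : C1set e.2 α = ∅) : cMono G k e α = 0 := by
  rw [cMono, if_pos hb, dif_pos hτ, if_neg hcard]
  rw [dif_neg (by rw [h1]; exact Finset.not_nonempty_empty)]

lemma cMono_C2 {e : Cell n} (hb : IsBasisCell G e) (hτ : e.2.Nonempty)
    (hcard : e.2.card = 1) {α : Fin n →₀ ℕ} {i : Fin n}
    (h1 : C1set e.2 α = ∅) (h2 : C2set G e.1 e.2 α = {i}) :
    cMono G k e α = ((-1 : MvPolynomial (Fin n) k) ^ (e.1.card + 1)) •
      ((monomial (α - Finsupp.single i 1) (1 : k)) • sym G k (insert i e.1, e.2)) := by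
  rw [cMono, if_pos hb, dif_pos hτ, if_pos hcard]
  rw [dif_neg (by rw [h1]; exact Finset.not_nonempty_empty)]
  simp only [h2]
  rw [dif_pos (Finset.singleton_nonempty i), Finset.min'_singleton]

lemma cMono_C1_card1 {e : Cell n} (hb : IsBasisCell G e) (hτ : e.2.Nonempty)
    (hcard : e.2.card = 1) {α : Fin n →₀ ℕ} {m : Fin n}
    (h1 : C1set e.2 α = {m}) (h3 : C3set G e.1 α = ∅) :
    cMono G k e α =
      (monomial (α - Finsupp.single m 1) (1 : k)) • sym G k (e.1, insert m e.2) := by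
  rw [cMono, if_pos hb, dif_pos hτ, if_pos hcard]
  simp only [h1, h3]
  rw [dif_pos (Finset.singleton_nonempty m), Finset.max'_singleton]
  rw [dif_neg Finset.not_nonempty_empty, add_zero]

lemma cMono_C1_card2 {e : Cell n} (hb : IsBasisCell G e) (hτ : e.2.Nonempty)
    (hcard : ¬ e.2.card = 1) {α : Fin n →₀ ℕ} {m : Fin n}
    (h1 : C1set e.2 α = {m}) :
    cMono G k e α =
      (monomial (α - Finsupp.single m 1) (1 : k)) • sym G k (e.1, insert m e.2) := by
  rw [cMono, if_pos hb, dif_pos hτ, if_neg hcard]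
  simp only [h1]
  rw [dif_pos (Finset.singleton_nonempty m), Finset.max'_singleton]

lemma cMono_not_basis {e : Cell n} (hb : ¬ IsBasisCell G e) (α : Fin n →₀ ℕ) :
    cMono G k e α = 0 := by rw [cMono, if_neg hb]

lemma cMono_empty (α : Fin n →₀ ℕ) :
    cMono G k ((∅, ∅) : Cell n) α = cZero G k α := by
  rw [cMono, if_pos (empty_isBasisCell G)]
  rw [dif_neg (by exact Finset.not_nonempty_empty)]

lemma cZero_eval {α : Fin n →₀ ℕ} {s t : Fin n} (h : DvdSet G α = {(s, t)}) :
    cZero G k α = (monomial (α - Finsupp.single s 1 - Finsupp.single t 1) (1 : k)) •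
      sym G k ({s}, {t}) := by
  rw [cZero]
  simp only [h, Finset.image_singleton]
  rw [dif_pos (Finset.singleton_nonempty _)]
  simp only [Finset.max'_singleton]
  simp only [Finset.filter_singleton, eq_self_iff_true, if_true, Finset.image_singleton]
  rw [dif_pos (Finset.singleton_nonempty _), Finset.min'_singleton]

end Aux3

section Aux4

variable {n : ℕ} (G : SimpleGraph (Fin n)) (k : Type) [Field k]

lemma neg_one_pow_C (m : ℕ) :
    ((-1 : MvPolynomial (Fin n) k)) ^ m = C ((-1 : k) ^ m) := by
  rw [map_pow, map_neg, map_one]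

lemma Cmap_term (m : ℕ) (i : Fin n) (cell : Cell n) :
    Cmap G k ((((-1 : MvPolynomial (Fin n) k)) ^ m * X i) • sym G k cell)
      = ((-1 : k) ^ m) • cMono G k cell (Finsupp.single i 1) := by
  by_cases hb : IsBasisCell G cell
  · rw [sym_of_basis _ _ hb, Finsupp.smul_single', mul_one]
    have h : ((-1 : MvPolynomial (Fin n) k)) ^ m * X i
        = monomial (Finsupp.single i 1) ((-1 : k) ^ m) := by
      rw [neg_one_pow_C, X, C_mul_monomial, mul_one]
    rw [h, Cmap_single]
  · rw [sym_of_not_basis _ _ hb, smul_zero, map_zero, cMono_not_basis _ _ hb, smul_zero]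

lemma smul_smul_neg_one (a b : ℕ) (hab : Even (a + b)) (x : Ftot n k) :
    ((-1 : k) ^ a) • (((-1 : MvPolynomial (Fin n) k)) ^ b) • x = x := by
  rw [← algebraMap_smul (MvPolynomial (Fin n) k) ((-1 : k) ^ a), smul_smul]
  have : (algebraMap k (MvPolynomial (Fin n) k)) ((-1 : k) ^ a) = ((-1 : MvPolynomial (Fin n) k)) ^ a := by
    rw [neg_one_pow_C]; rfl
  rw [this, ← pow_add, hab.neg_one_pow, one_smul]

lemma Cmap_diffCell_two {e : Cell n} (hb : IsBasisCell G e) (hc : e.1.card + e.2.card = 2)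
    (hσ : e.1.Nonempty) (hτ : e.2.Nonempty)
    (hlt : ∀ i ∈ e.1, ∀ j ∈ e.2, i < j)
    (hadj : ∀ i ∈ e.1, ∀ j ∈ e.2, (∀ j' ∈ e.2, j ≤ j') → G.Adj i j) :
    Cmap G k (diffCell G k e) = Finsupp.single e 1 := by
  obtain ⟨σ, τ⟩ := e
  have hc' : σ.card + τ.card = 2 := hc
  have hσ' : σ.Nonempty := hσ
  have hτ' : τ.Nonempty := hτ
  have hσ1 : σ.card = 1 := by
    have := Finset.card_pos.mpr hσ'
    have := Finset.card_pos.mpr hτ'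
    omega
  have hτ1 : τ.card = 1 := by
    have := Finset.card_pos.mpr hσ'
    omega
  obtain ⟨s, rfl⟩ := Finset.card_eq_one.mp hσ1
  obtain ⟨t, rfl⟩ := Finset.card_eq_one.mp hτ1
  have hst : s < t := hlt s (Finset.mem_singleton_self s) t (Finset.mem_singleton_self t)
  have hadjst : G.Adj s t := by
    refine hadj s (Finset.mem_singleton_self s) t (Finset.mem_singleton_self t) ?_
    intro j' hj'
    rw [Finset.mem_singleton] at hj'
    exact le_of_eq hj'.symm
  rw [diffCell, if_pos hb, if_pos hc]
  have hprod : (∏ i ∈ ({s} : Finset (Fin n)) ∪ {t}, (X i : MvPolynomial (Fin n) k))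
      = monomial (Finsupp.single s 1 + Finsupp.single t 1) 1 := by
    rw [show ({s} : Finset (Fin n)) ∪ {t} = ({s, t} : Finset (Fin n)) by ext x; simp]
    rw [Finset.prod_pair (ne_of_lt hst), X, X, monomial_mul, mul_one]
  rw [hprod, sym_of_basis _ _ (empty_isBasisCell G), Finsupp.smul_single', mul_one,
    Cmap_single, one_smul, cMono_empty]
  have hD : DvdSet G (Finsupp.single s 1 + Finsupp.single t 1) = {(s, t)} := by
    ext p
    simp only [DvdSet, Finset.mem_filter, Finset.mem_univ, true_and, Finset.mem_singleton,
      Finsupp.add_apply, Finsupp.single_apply]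
    constructor
    · rintro ⟨hlt', hadj', h1, h2⟩
      have hp1 : p.1 = s ∨ p.1 = t := by
        by_contra hcon
        push_neg at hcon
        rw [if_neg (fun h => hcon.1 h.symm), if_neg (fun h => hcon.2 h.symm)] at h1
        omega
      have hp2 : p.2 = s ∨ p.2 = t := by
        by_contra hcon
        push_neg at hcon
        rw [if_neg (fun h => hcon.1 h.symm), if_neg (fun h => hcon.2 h.symm)] at h2
        omega
      have h1' : p.1 = s := by
        rcases hp1 with h | h
        · exact h
        · exfalso
          rcases hp2 with h' | h'
          · rw [h, h'] at hlt'
            exact absurd (hlt'.trans hst) (lt_irrefl t)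
          · rw [h, h'] at hlt'
            exact lt_irrefl t hlt'
      have h2' : p.2 = t := by
        rcases hp2 with h' | h'
        · rw [h1', h'] at hlt'
          exact absurd hlt' (lt_irrefl s)
        · exact h'
      exact Prod.ext h1' h2'
    · rintro rfl
      refine ⟨hst, hadjst, ?_, ?_⟩
      · show 1 ≤ (if s = s then 1 else 0) + if t = s then 1 else 0
        rw [if_pos rfl, if_neg (ne_of_gt hst)]
        omega
      · show 1 ≤ (if s = t then 1 else 0) + if t = t then 1 else 0
        rw [if_neg (ne_of_lt hst), if_pos rfl]
  rw [cZero_eval _ _ hD]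
  have hα : (Finsupp.single s 1 + Finsupp.single t 1 - Finsupp.single s 1
      - Finsupp.single t 1 : Fin n →₀ ℕ) = 0 := by
    ext a
    simp only [Finsupp.coe_tsub, Pi.sub_apply, Finsupp.add_apply, Finsupp.coe_zero, Pi.zero_apply]
    omega
  rw [hα, monomial_zero', C_1, one_smul, sym_of_basis _ _ hb]

end Aux4

section Aux5

variable {n : ℕ} (G : SimpleGraph (Fin n)) (k : Type) [Field k]

lemma filter_min'_eq_erase (σ : Finset (Fin n)) (hσ : σ.Nonempty) :
    σ.filter (fun j => σ.min' hσ < j) = σ.erase (σ.min' hσ) := by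
  ext a
  simp only [Finset.mem_filter, Finset.mem_erase]
  constructor
  · rintro ⟨ha, hlt⟩
    exact ⟨ne_of_gt hlt, ha⟩
  · rintro ⟨hne, ha⟩
    exact ⟨ha, lt_of_le_of_ne (Finset.min'_le σ a ha) (Ne.symm hne)⟩

lemma single_sub_self (i : Fin n) :
    (Finsupp.single i 1 - Finsupp.single i 1 : Fin n →₀ ℕ) = 0 := by
  ext a
  simp

lemma Cmap_diffCell_big {σ τ : Finset (Fin n)} (hb : IsBasisCell G (σ, τ))
    (hσ : σ.Nonempty) (hτ : τ.Nonempty) (hdisj : Disjoint σ τ)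
    (hlt : ∀ i ∈ σ, ∀ j ∈ τ, i < j)
    (hadj : ∀ i ∈ σ, ∀ j ∈ τ, (∀ j' ∈ τ, j ≤ j') → G.Adj i j)
    (hc : 3 ≤ σ.card + τ.card) :
    Cmap G k (diffCell G k (σ, τ)) = Finsupp.single (σ, τ) 1 := by
  rw [diffCell, if_pos hb,
    if_neg (show ¬ ((σ, τ).1.card + (σ, τ).2.card = 2) by
      have : σ.card + τ.card ≠ 2 := by omega
      exact this),
    if_pos (show 3 ≤ (σ, τ).1.card + (σ, τ).2.card from hc)]
  rw [map_add, map_sum, map_sum]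
  simp only [Cmap_term]
  by_cases hq : τ.card = 1
  · -- |τ| = 1, so |σ| ≥ 2
    have hp2 : 2 ≤ σ.card := by omega
    obtain ⟨t, rfl⟩ := Finset.card_eq_one.mp hq
    have hS2 : ∑ i ∈ ((σ, ({t} : Finset (Fin n))).2),
        ((-1 : k) ^ ((((σ, ({t} : Finset (Fin n))).2).filter fun j => i < j).card)) •
          cMono G k ((σ, ({t} : Finset (Fin n))).1, ((σ, ({t} : Finset (Fin n))).2).erase i)
            (Finsupp.single i 1) = 0 := by
      rw [Finset.sum_singleton]
      have hnb : ¬ IsBasisCell G ((σ, ({t} : Finset (Fin n))).1,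
          (({t} : Finset (Fin n))).erase t) := by
        rw [Finset.erase_singleton]
        rintro (h | ⟨-, h2, -⟩)
        · rw [Prod.mk.injEq] at h
          exact hσ.ne_empty h.1
        · exact Finset.not_nonempty_empty h2
      rw [cMono_not_basis _ _ hnb, smul_zero]
    rw [hS2, add_zero]
    set s1 := σ.min' hσ with hs1
    have hs1mem : s1 ∈ σ := Finset.min'_mem σ hσ
    rw [Finset.sum_eq_single_of_mem s1 hs1mem ?h0]
    case h0 =>
      intro i hi hne
      have hz : cMono G k ((σ, ({t} : Finset (Fin n))).1.erase i,
          (σ, ({t} : Finset (Fin n))).2) (Finsupp.single i 1) = 0 := by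
        by_cases hbi : IsBasisCell G (σ.erase i, ({t} : Finset (Fin n)))
        · refine cMono_zero1 G k hbi (Finset.singleton_nonempty t) (Finset.card_singleton t)
            (C1set_single_empty (Finset.mem_singleton_self t)
              (hlt i hi t (Finset.mem_singleton_self t))) ?_
          exact C2set_single_empty G
            (Finset.mem_erase.mpr ⟨fun h => hne (h ▸ rfl), hs1mem⟩)
            (not_lt.mpr (Finset.min'_le σ i hi))
        · exact cMono_not_basis G k hbi _
      rw [hz, smul_zero]
    -- the main term at i = s1
    have hb1 : IsBasisCell G (σ.erase s1, ({t} : Finset (Fin n))) := by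
      refine Or.inr ⟨?_, Finset.singleton_nonempty t, ?_, ?_, ?_⟩
      · rw [← Finset.card_pos, Finset.card_erase_of_mem hs1mem]
        omega
      · exact Finset.disjoint_of_subset_left (Finset.erase_subset _ _) hdisj
      · intro i hi j hj
        exact hlt i (Finset.mem_of_mem_erase hi) j hj
      · intro i hi j hj hmin
        exact hadj i (Finset.mem_of_mem_erase hi) j hj
          (fun j' hj' => hmin j' hj')
    have h1 : C1set (({t} : Finset (Fin n))) (Finsupp.single s1 1) = ∅ :=
      C1set_single_empty (Finset.mem_singleton_self t)
        (hlt s1 hs1mem t (Finset.mem_singleton_self t))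
    have h2 : C2set G (σ.erase s1) (({t} : Finset (Fin n))) (Finsupp.single s1 1) = {s1} := by
      refine C2set_single_self G ?_ ?_
      · intro s hs
        rw [Finset.mem_erase] at hs
        exact lt_of_le_of_ne (Finset.min'_le σ s hs.2) (Ne.symm hs.1)
      · intro j hj hmin
        rw [Finset.mem_singleton] at hj
        subst hj
        exact hadj s1 hs1mem j (Finset.mem_singleton_self j)
          (fun j' hj' => by rw [Finset.mem_singleton] at hj'; exact le_of_eq hj'.symm)
    rw [show ((σ, ({t} : Finset (Fin n))).1.erase s1, (σ, ({t} : Finset (Fin n))).2)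
        = ((σ.erase s1), ({t} : Finset (Fin n))) from rfl]
    rw [cMono_C2 G k hb1 (Finset.singleton_nonempty t) (Finset.card_singleton t) h1 h2]
    rw [single_sub_self, monomial_zero', C_1, one_smul,
      Finset.insert_erase hs1mem, sym_of_basis _ _ hb]
    rw [show ((σ, ({t} : Finset (Fin n))).2.card) = 1 from Finset.card_singleton t]
    rw [show ((σ, ({t} : Finset (Fin n))).1.filter fun j => s1 < j) = σ.erase s1 from
      filter_min'_eq_erase σ hσ]
    rw [show ((σ.erase s1, ({t} : Finset (Fin n))).1.card) = (σ.erase s1).card from rfl]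
    exact smul_smul_neg_one k (1 + (σ.erase s1).card) ((σ.erase s1).card + 1)
      ⟨(σ.erase s1).card + 1, by ring⟩ _
  · -- |τ| ≥ 2
    have hq2 : 2 ≤ τ.card := by
      have := Finset.card_pos.mpr hτ
      omega
    have hS1 : ∑ i ∈ ((σ, τ).1),
        ((-1 : k) ^ (((σ, τ).2.card + (((σ, τ).1).filter fun j => i < j).card))) •
          cMono G k (((σ, τ).1).erase i, (σ, τ).2) (Finsupp.single i 1) = 0 := by
      refine Finset.sum_eq_zero ?_
      intro i hi
      obtain ⟨t0, ht0⟩ := hτ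
      have hz : cMono G k (σ.erase i, τ) (Finsupp.single i 1) = 0 := by
        by_cases hbi : IsBasisCell G (σ.erase i, τ)
        · exact cMono_zero2 G k hbi ⟨t0, ht0⟩ hq
            (C1set_single_empty ht0 (hlt i hi t0 ht0))
        · exact cMono_not_basis G k hbi _
      rw [show (((σ, τ).1).erase i, (σ, τ).2) = (σ.erase i, τ) from rfl, hz, smul_zero]
    rw [hS1, zero_add]
    set tq := τ.max' hτ with htq
    have htqmem : tq ∈ τ := Finset.max'_mem τ hτ
    have herne : (τ.erase tq).Nonempty := by
      rw [← Finset.card_pos, Finset.card_erase_of_mem htqmem]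
      omega
    rw [Finset.sum_eq_single_of_mem tq htqmem ?h0']
    case h0' =>
      intro i hi hne
      have hitq : i < tq := lt_of_le_of_ne (Finset.le_max' τ i hi) hne
      have hz : cMono G k (σ, τ.erase i) (Finsupp.single i 1) = 0 := by
        by_cases hbi : IsBasisCell G (σ, τ.erase i)
        · have h1 : C1set (τ.erase i) (Finsupp.single i 1) = ∅ :=
            C1set_single_empty (Finset.mem_erase.mpr ⟨(ne_of_gt hitq), htqmem⟩) hitq
          obtain ⟨s0, hs0⟩ := hσ
          by_cases hc1 : (τ.erase i).card = 1
          · exact cMono_zero1 G k hbi ⟨tq, Finset.mem_erase.mpr ⟨ne_of_gt hitq, htqmem⟩⟩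
              hc1 h1 (C2set_single_empty G hs0 (not_lt.mpr (hlt s0 hs0 i hi).le))
          · exact cMono_zero2 G k hbi ⟨tq, Finset.mem_erase.mpr ⟨ne_of_gt hitq, htqmem⟩⟩
              hc1 h1
        · exact cMono_not_basis G k hbi _
      rw [show ((σ, τ).1, ((σ, τ).2).erase i) = (σ, τ.erase i) from rfl, hz, smul_zero]
    -- main term at i = tq
    have hfilt0 : (τ.filter fun j => tq < j) = ∅ := by
      ext a
      simp only [Finset.mem_filter, Finset.notMem_empty, iff_false, not_and]
      intro ha
      exact not_lt.mpr (Finset.le_max' τ a ha)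
    have hbe : IsBasisCell G (σ, τ.erase tq) := by
      refine Or.inr ⟨hσ, herne, ?_, ?_, ?_⟩
      · exact Finset.disjoint_of_subset_right (Finset.erase_subset _ _) hdisj
      · intro i hi j hj
        exact hlt i hi j (Finset.mem_of_mem_erase hj)
      · intro i hi j hj hmin
        refine hadj i hi j (Finset.mem_of_mem_erase hj) ?_
        intro j' hj'
        by_cases hj'tq : j' = tq
        · subst hj'tq
          exact Finset.le_max' τ j (Finset.mem_of_mem_erase hj)
        · exact hmin j' (Finset.mem_erase.mpr ⟨hj'tq, hj'⟩)
    have h1 : C1set (τ.erase tq) (Finsupp.single tq 1) = {tq} := by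
      refine C1set_single_self ?_
      intro j hj
      rw [Finset.mem_erase] at hj
      exact lt_of_le_of_ne (Finset.le_max' τ j hj.2) hj.1
    rw [show ((σ, τ).1, ((σ, τ).2).erase tq) = (σ, τ.erase tq) from rfl]
    have hmain : cMono G k (σ, τ.erase tq) (Finsupp.single tq 1)
        = (monomial ((Finsupp.single tq 1 : Fin n →₀ ℕ) - Finsupp.single tq 1) (1 : k)) •
            sym G k (σ, insert tq (τ.erase tq)) := by
      by_cases hc1 : (τ.erase tq).card = 1
      · exact cMono_C1_card1 G k hbe herne hc1 h1 (C3set_single G σ tq)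
      · exact cMono_C1_card2 G k hbe herne hc1 h1
    rw [hmain, single_sub_self, monomial_zero', C_1, one_smul,
      Finset.insert_erase htqmem, sym_of_basis _ _ hb]
    rw [show (((σ, τ).2).filter fun j => tq < j) = (∅ : Finset (Fin n)) from hfilt0]
    rw [Finset.card_empty, pow_zero, one_smul]

lemma Cmap_diffCell {e : Cell n} (hb : IsBasisCell G e) (hc : 2 ≤ e.1.card + e.2.card) :
    Cmap G k (diffCell G k e) = Finsupp.single e 1 := by
  have hr := hb.resolve_left (by
    intro h
    rw [h] at hc
    simp at hc)
  obtain ⟨σ, τ⟩ := e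
  obtain ⟨hσ, hτ, hdisj, hlt, hadj⟩ := hr
  by_cases h2 : σ.card + τ.card = 2
  · exact Cmap_diffCell_two G k hb h2 hσ hτ hlt hadj
  · exact Cmap_diffCell_big G k hb hσ hτ hdisj hlt hadj (by
      have hc' : 2 ≤ σ.card + τ.card := hc
      omega)

end Aux5

section Aux6

variable {n : ℕ} (G : SimpleGraph (Fin n)) (k : Type) [Field k]

lemma cell_from_sym {c : MvPolynomial (Fin n) k} {cell e' : Cell n}
    (h : (c • sym G k cell) e' ≠ 0) : IsBasisCell G cell ∧ e' = cell := by
  by_cases hb : IsBasisCell G cell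
  · refine ⟨hb, ?_⟩
    rw [sym_of_basis _ _ hb, Finsupp.smul_apply] at h
    by_contra hne
    rw [Finsupp.single_eq_of_ne' (fun hh => hne hh.symm), smul_zero] at h
    exact h rfl
  · rw [sym_of_not_basis _ _ hb, smul_zero] at h
    exact absurd rfl h

lemma diffCell_support {e : Cell n} (hb : IsBasisCell G e) (hc : 2 ≤ e.1.card + e.2.card)
    {e' : Cell n} (h : e' ∈ (diffCell G k e).support) :
    IsBasisCell G e' ∧ cellDeg e' + 1 = cellDeg e := by
  have hr := hb.resolve_left (fun hh => by rw [hh] at hc; simp at hc)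
  obtain ⟨hσ, hτ, -, -, -⟩ := hr
  have hσc := Finset.card_pos.mpr hσ
  have hτc := Finset.card_pos.mpr hτ
  rw [Finsupp.mem_support_iff] at h
  by_cases h2 : e.1.card + e.2.card = 2
  · rw [diffCell, if_pos hb, if_pos h2] at h
    have h' : e' = ((∅, ∅) : Cell n) := by
      have := cell_from_sym G k (c := ∏ i ∈ e.1 ∪ e.2, (X i : MvPolynomial (Fin n) k))
        (cell := ((∅, ∅) : Cell n)) (e' := e') h
      exact this.2
    subst h'
    refine ⟨empty_isBasisCell G, ?_⟩
    simp only [cellDeg]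
    simp only [Finset.card_empty]
    omega
  · have h3 : 3 ≤ e.1.card + e.2.card := by omega
    rw [diffCell, if_pos hb, if_neg h2, if_pos h3, Finsupp.add_apply] at h
    have hor : (∑ i ∈ e.1,
        (((-1 : MvPolynomial (Fin n) k) ^ (e.2.card + (e.1.filter fun j => i < j).card)) * X i) •
          sym G k (e.1.erase i, e.2)) e' ≠ 0 ∨
        (∑ i ∈ e.2,
        (((-1 : MvPolynomial (Fin n) k) ^ ((e.2.filter fun j => i < j).card)) * X i) •
          sym G k (e.1, e.2.erase i)) e' ≠ 0 := by
      by_contra hcon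
      push_neg at hcon
      rw [hcon.1, hcon.2] at h
      simp at h
    rcases hor with h' | h'
    · rw [Finsupp.finset_sum_apply] at h'
      obtain ⟨i, hi, hne⟩ := Finset.exists_ne_zero_of_sum_ne_zero h'
      obtain ⟨hbc, rfl⟩ := cell_from_sym G k hne
      refine ⟨hbc, ?_⟩
      have hrc := hbc.resolve_left (by
        rintro hh
        rw [Prod.mk.injEq] at hh
        exact hτ.ne_empty hh.2)
      have h1c := Finset.card_pos.mpr hrc.1
      rw [Finset.card_erase_of_mem hi] at h1c
      simp only [cellDeg]
      rw [Finset.card_erase_of_mem hi]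
      omega
    · rw [Finsupp.finset_sum_apply] at h'
      obtain ⟨i, hi, hne⟩ := Finset.exists_ne_zero_of_sum_ne_zero h'
      obtain ⟨hbc, rfl⟩ := cell_from_sym G k hne
      refine ⟨hbc, ?_⟩
      have hrc := hbc.resolve_left (by
        rintro hh
        rw [Prod.mk.injEq] at hh
        exact hσ.ne_empty hh.1)
      have h2c := Finset.card_pos.mpr hrc.2.1
      rw [Finset.card_erase_of_mem hi] at h2c
      simp only [cellDeg]
      rw [Finset.card_erase_of_mem hi]
      omega

lemma basis_two_le {e : Cell n} (hb : IsBasisCell G e) (hne : e ≠ ((∅, ∅) : Cell n)) :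
    2 ≤ e.1.card + e.2.card := by
  have hr := hb.resolve_left hne
  have := Finset.card_pos.mpr hr.1
  have := Finset.card_pos.mpr hr.2.1
  omega

lemma basis_cellDeg_zero {e : Cell n} (hb : IsBasisCell G e) :
    cellDeg e = 0 ↔ e = ((∅, ∅) : Cell n) := by
  constructor
  · intro h0
    by_contra hne
    have h2 := basis_two_le G hb hne
    simp only [cellDeg] at h0
    omega
  · rintro rfl
    rfl

end Aux6

section Aux7

variable {n : ℕ} (G : SimpleGraph (Fin n)) (k : Type) [Field k]

lemma biext_single_left (x : Cell n) (bf : Cell n → Cell n → Ftot n k) (g : Ftot n k) :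
    biext k bf (Finsupp.single x 1) g = ∑ e₂ ∈ g.support, g e₂ • bf x e₂ := by
  rw [biext, Finsupp.support_single_ne_zero _ one_ne_zero, Finset.sum_singleton]
  refine Finset.sum_congr rfl fun e₂ _ => ?_
  rw [Finsupp.single_eq_same, one_mul]

lemma biext_single_right (x : Cell n) (bf : Cell n → Cell n → Ftot n k) (f : Ftot n k) :
    biext k bf f (Finsupp.single x 1) = ∑ e₁ ∈ f.support, f e₁ • bf e₁ x := by
  rw [biext]
  refine Finset.sum_congr rfl fun e₁ _ => ?_
  rw [Finsupp.support_single_ne_zero _ one_ne_zero, Finset.sum_singleton,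
    Finsupp.single_eq_same, mul_one]

lemma biext_zero_left (bf : Cell n → Cell n → Ftot n k) (g : Ftot n k) :
    biext k bf 0 g = 0 := by
  rw [biext, Finsupp.support_zero, Finset.sum_empty]

lemma biext_zero_right (bf : Cell n → Cell n → Ftot n k) (f : Ftot n k) :
    biext k bf f 0 = 0 := by
  rw [biext]
  refine Finset.sum_eq_zero fun e₁ _ => ?_
  rw [Finsupp.support_zero, Finset.sum_empty]

lemma sum_support_smul_single (f : Ftot n k) :
    ∑ e ∈ f.support, f e • Finsupp.single e 1 = f := by
  conv_rhs => rw [← Finsupp.sum_single f]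
  rw [Finsupp.sum]
  refine Finset.sum_congr rfl fun e _ => ?_
  rw [Finsupp.smul_single', mul_one]

lemma bstar_unit (N : ℕ) : ∀ e : Cell n, IsBasisCell G e → cellDeg e + 1 ≤ N →
    bstar G k N ((∅, ∅) : Cell n) e = Finsupp.single e 1 ∧
    bstar G k N e ((∅, ∅) : Cell n) = Finsupp.single e 1 := by
  induction N with
  | zero => intro e _ h; omega
  | succ N ih =>
    intro e hb hN
    by_cases h0 : cellDeg e = 0
    · have he : e = ((∅, ∅) : Cell n) := (basis_cellDeg_zero G hb).mp h0
      subst he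
      constructor <;> (rw [bstar]; rw [if_pos
        (show cellDeg ((∅, ∅) : Cell n) + cellDeg ((∅, ∅) : Cell n) = 0 from rfl)])
    · have hne : e ≠ ((∅, ∅) : Cell n) := fun hh =>
        h0 ((basis_cellDeg_zero G hb).mpr hh)
      have he2 : 2 ≤ e.1.card + e.2.card := basis_two_le G hb hne
      have key : ∀ e' ∈ (diffCell G k e).support,
          bstar G k N ((∅, ∅) : Cell n) e' = Finsupp.single e' 1 ∧
          bstar G k N e' ((∅, ∅) : Cell n) = Finsupp.single e' 1 := by
        intro e' h'
        obtain ⟨hb', hd'⟩ := diffCell_support G k hb he2 h'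
        exact ih e' hb' (by omega)
      have hD0 : Dmap G k (Finsupp.single ((∅, ∅) : Cell n) 1) = 0 := by
        rw [Dmap_single, one_smul, diffCell, if_pos (empty_isBasisCell G)]
        norm_num
      have hDe : Dmap G k (Finsupp.single e 1) = diffCell G k e := by
        rw [Dmap_single, one_smul]
      constructor
      · rw [bstar, if_neg (show ¬ (cellDeg ((∅, ∅) : Cell n) + cellDeg e = 0) by
          rw [cellDeg_empty, zero_add]; exact h0)]
        rw [hD0, biext_zero_left, map_zero, zero_add, hDe, biext_single_left]
        have hsum : ∑ e' ∈ (diffCell G k e).support,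
            (diffCell G k e) e' • bstar G k N ((∅, ∅) : Cell n) e'
            = ∑ e' ∈ (diffCell G k e).support,
              (diffCell G k e) e' • Finsupp.single e' 1 := by
          refine Finset.sum_congr rfl fun e' h' => ?_
          rw [(key e' h').1]
        rw [hsum, sum_support_smul_single, cellDeg_empty, pow_zero, one_smul,
          Cmap_diffCell G k hb he2]
      · rw [bstar, if_neg (show ¬ (cellDeg e + cellDeg ((∅, ∅) : Cell n) = 0) by
          rw [cellDeg_empty, add_zero]; exact h0)]
        rw [hD0, biext_zero_right, map_zero, smul_zero, add_zero, hDe, biext_single_right]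
        have hsum : ∑ e' ∈ (diffCell G k e).support,
            (diffCell G k e) e' • bstar G k N e' ((∅, ∅) : Cell n)
            = ∑ e' ∈ (diffCell G k e).support,
              (diffCell G k e) e' • Finsupp.single e' 1 := by
          refine Finset.sum_congr rfl fun e' h' => ?_
          rw [(key e' h').2]
        rw [hsum, sum_support_smul_single, Cmap_diffCell G k hb he2]

end Aux7

section Aux8

variable {n : ℕ} (G : SimpleGraph (Fin n)) (k : Type) [Field k]

lemma biext_repr (bf : Cell n → Cell n → Ftot n k) (f g : Ftot n k) :
    biext k bf f g
      = ∑ e₁ ∈ f.support, Finsupp.sum g (fun e₂ c => (f e₁ * c) • bf e₁ e₂) := rfl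

lemma biext_repr_left (bf : Cell n → Cell n → Ftot n k) (f g : Ftot n k) :
    biext k bf f g
      = Finsupp.sum f (fun e₁ c₁ => ∑ e₂ ∈ g.support, (c₁ * g e₂) • bf e₁ e₂) := rfl

lemma biext_add_right (bf : Cell n → Cell n → Ftot n k) (f g h : Ftot n k) :
    biext k bf f (g + h) = biext k bf f g + biext k bf f h := by
  rw [biext_repr, biext_repr, biext_repr, ← Finset.sum_add_distrib]
  refine Finset.sum_congr rfl fun e₁ _ => ?_
  exact Finsupp.sum_add_index' (fun e₂ => by rw [mul_zero, zero_smul])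
    (fun e₂ c d => by rw [mul_add, add_smul])

lemma biext_smul_right (bf : Cell n → Cell n → Ftot n k) (c : MvPolynomial (Fin n) k)
    (f g : Ftot n k) : biext k bf f (c • g) = c • biext k bf f g := by
  rw [biext_repr, biext_repr, Finset.smul_sum]
  refine Finset.sum_congr rfl fun e₁ _ => ?_
  rw [Finsupp.sum_smul_index' (fun e₂ => by rw [mul_zero, zero_smul]), Finsupp.smul_sum]
  refine Finsupp.sum_congr fun e₂ _ => ?_
  rw [smul_eq_mul, ← mul_assoc, mul_comm (f e₁) c, mul_assoc, mul_smul]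

lemma biext_add_left (bf : Cell n → Cell n → Ftot n k) (f f' g : Ftot n k) :
    biext k bf (f + f') g = biext k bf f g + biext k bf f' g := by
  rw [biext_repr_left, biext_repr_left, biext_repr_left]
  exact Finsupp.sum_add_index'
    (fun e₁ => Finset.sum_eq_zero fun e₂ _ => by rw [zero_mul, zero_smul])
    (fun e₁ c d => by
      rw [← Finset.sum_add_distrib]
      exact Finset.sum_congr rfl fun e₂ _ => by rw [add_mul, add_smul])

lemma biext_smul_left (bf : Cell n → Cell n → Ftot n k) (c : MvPolynomial (Fin n) k)
    (f g : Ftot n k) : biext k bf (c • f) g = c • biext k bf f g := by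
  rw [biext_repr_left, biext_repr_left]
  rw [Finsupp.sum_smul_index'
    (fun e₁ => Finset.sum_eq_zero fun e₂ _ => by rw [zero_mul, zero_smul])]
  rw [Finsupp.smul_sum]
  refine Finsupp.sum_congr fun e₁ _ => ?_
  rw [Finset.smul_sum]
  refine Finset.sum_congr rfl fun e₂ _ => ?_
  rw [smul_eq_mul, mul_assoc, mul_smul]

end Aux8
theorem stmt9 (n : ℕ) (hn : 1 ≤ n) (a b : Fin n → ℝ)
    (hab : ∀ i, a i ≤ b i) (hmono : ∀ i j : Fin n, i < j → a i ≤ a j)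
    (k : Type) [Field k]
    (p : ℕ) (f : Ftot n k) (hf : f ∈ Fsub (cigraph n a b) k p) :
    pstar (cigraph n a b) k (Finsupp.single ((∅, ∅) : Cell n) 1) f = f ∧
    pstar (cigraph n a b) k f (Finsupp.single ((∅, ∅) : Cell n) 1) = f := by
  set G := cigraph n a b with hG
  have hfuel : ∀ e : Cell n, cellDeg e + 1 ≤ 4 * n + 4 := by
    intro e
    have h1 : e.1.card ≤ n := le_trans (Finset.card_le_univ e.1)
      (le_of_eq (Finset.card_fin n))
    have h2 : e.2.card ≤ n := le_trans (Finset.card_le_univ e.2)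
      (le_of_eq (Finset.card_fin n))
    simp only [cellDeg]
    omega
  have hgen : ∀ e : Cell n, IsBasisCell G e →
      pstar G k (Finsupp.single ((∅, ∅) : Cell n) 1) (Finsupp.single e 1)
        = Finsupp.single e 1 ∧
      pstar G k (Finsupp.single e 1) (Finsupp.single ((∅, ∅) : Cell n) 1)
        = Finsupp.single e 1 := by
    intro e hb
    have hu := bstar_unit G k (4 * n + 4) e hb (hfuel e)
    constructor
    · rw [pstar, biext_single_left, Finsupp.support_single_ne_zero _ one_ne_zero,
        Finset.sum_singleton, Finsupp.single_eq_same, one_smul, hu.1]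
    · rw [pstar, biext_single_right, Finsupp.support_single_ne_zero _ one_ne_zero,
        Finset.sum_singleton, Finsupp.single_eq_same, one_smul, hu.2]
  constructor
  · refine Submodule.span_induction ?_ ?_ ?_ ?_ hf
    · rintro x ⟨e, ⟨hbe, -⟩, rfl⟩
      exact (hgen e hbe).1
    · rw [pstar, biext_zero_right]
    · intro x y _ _ hx hy
      rw [pstar, biext_add_right]
      exact congrArg₂ (· + ·) hx hy
    · intro c x _ hx
      rw [pstar, biext_smul_right]
      exact congrArg (c • ·) hx
  · refine Submodule.span_induction ?_ ?_ ?_ ?_ hf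
    · rintro x ⟨e, ⟨hbe, -⟩, rfl⟩
      exact (hgen e hbe).2
    · rw [pstar, biext_zero_left]
    · intro x y _ _ hx hy
      rw [pstar, biext_add_left]
      exact congrArg₂ (· + ·) hx hy
    · intro c x _ hx
      rw [pstar, biext_smul_left]
      exact congrArg (c • ·) hx

end EdgeRes
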